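/- For q = 1 and R a commutative ring with 1, the representation σ_{r,s}: B^n_{r,s} → End_G(V^{⊗r} ⊗ (V*)^{⊗s}) of the walled Brauer algebra is surjective if and only if the representation σ_{r+s}: R𝔖_{r+s} → End_G(V^{⊗(r+s)}) of the symmetric group algebra is surjective, where G = GL_n(R). -/

import Mathlib

namespace ClassicalWalledBrauer

variable (R : Type*) [CommRing R] (n r s : ℕ)

/-- Multi-indices labelling the basis of `V^{⊗r} ⊗ (V^*)^{⊗s}` (or of `V^{⊗(r+s)}`),
`V = R^n`. -/
abbrev Idx (n m : ℕ) := Fin m → Fin n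

/-- Mixed tensor space `V^{⊗r} ⊗ (V^*)^{⊗s}` (and likewise ordinary tensor space
`V^{⊗(r+s)}`), modelled on its basis of multi-indices; positions `< r` carry `V`,
positions `≥ r` carry `V^*` (identified with `V` via `v_i ↦ v_i^*`). -/
abbrev TSpace (R : Type*) [CommRing R] (n m : ℕ) := Idx n m → R

/-- Matrix of the action of `g ∈ GL_n(R)` on mixed tensor space: `g` acts naturally on the
`V`-factors (positions `< r`) and by `(g·f)(v) = f(g⁻¹ v)` on the `V^*`-factors. -/
def glMixedMatrix (g : GL (Fin n) R) : Matrix (Idx n (r + s)) (Idx n (r + s)) R :=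
  fun a a' => ∏ k : Fin (r + s),
    if (k : ℕ) < r then (g : Matrix (Fin n) (Fin n) R) (a k) (a' k)
    else ((g⁻¹ : GL (Fin n) R) : Matrix (Fin n) (Fin n) R) (a' k) (a k)

/-- Matrix of the natural action of `g ∈ GL_n(R)` on ordinary tensor space `V^{⊗m}`. -/
def glOrdMatrix (m : ℕ) (g : GL (Fin n) R) : Matrix (Idx n m) (Idx n m) R :=
  fun a a' => ∏ k : Fin m, (g : Matrix (Fin n) (Fin n) R) (a k) (a' k)

/-- `G`-endomorphisms of mixed tensor space. -/
def EndGMixed : Set (Module.End R (TSpace R n (r + s))) :=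
  {φ | ∀ g : GL (Fin n) R, Commute φ (Matrix.toLin' (glMixedMatrix R n r s g))}

/-- `G`-endomorphisms of ordinary tensor space `V^{⊗(r+s)}`. -/
def EndGOrd : Set (Module.End R (TSpace R n (r + s))) :=
  {φ | ∀ g : GL (Fin n) R, Commute φ (Matrix.toLin' (glOrdMatrix R n (r + s) g))}

/-- Vertices of a Brauer `(r+s)`-diagram: top row (`inl`) and bottom row (`inr`). -/
abbrev Vertex (m : ℕ) := Fin m ⊕ Fin m

/-- The row (top = `true`) of a vertex. -/
def rowOf {m : ℕ} : Vertex m → Bool := Sum.elim (fun _ => true) (fun _ => false)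

/-- Whether a vertex lies to the left of the wall (in the first `r` positions). -/
def leftOf {m : ℕ} (r : ℕ) : Vertex m → Bool :=
  Sum.elim (fun k => decide ((k : ℕ) < r)) (fun k => decide ((k : ℕ) < r))

/-- A walled Brauer diagram: a perfect matching of the `2(r+s)` vertices such that
propagating edges (connecting opposite rows) stay on one side of the wall, and horizontal
edges (within a row) cross the wall. -/
def IsWalled (d : Vertex (r + s) → Vertex (r + s)) : Prop :=
  (∀ v, d (d v) = v) ∧ (∀ v, d v ≠ v) ∧
  (∀ v, (rowOf v ≠ rowOf (d v) → leftOf r v = leftOf r (d v)) ∧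
        (rowOf v = rowOf (d v) → leftOf r v ≠ leftOf r (d v)))

/-- The walled Brauer diagrams. -/
def WalledDiagram := {d : Vertex (r + s) → Vertex (r + s) // IsWalled r s d}

/-- The matrix of the action of a Brauer diagram `d` (for `q = 1`): the `(a, b)` entry is
`1` if both ends of each edge of `d` carry the same index (top row labelled by `a`, bottom
row by `b`), and `0` otherwise. -/
def diagMatrix (m : ℕ) (d : Vertex m → Vertex m) : Matrix (Idx n m) (Idx n m) R :=
  fun a b =>
    if ∀ v, Sum.elim a b v = Sum.elim a b (d v) then 1 else 0

/-- Matrix of the place-permutation action of `σ ∈ 𝔖_m` on `V^{⊗m}` (the totally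
propagating Brauer diagram of `σ`). -/
def permMatrix (m : ℕ) (σ : Equiv.Perm (Fin m)) : Matrix (Idx n m) (Idx n m) R :=
  fun a b => if b = a ∘ σ then 1 else 0

/-- The representation `σ_{r,s}` of the walled Brauer algebra `B^n_{r,s}` (as the free
`R`-module on walled Brauer diagrams) on mixed tensor space. -/
noncomputable def walledRep :
    (WalledDiagram r s →₀ R) →ₗ[R] Module.End R (TSpace R n (r + s)) :=
  Finsupp.lift (Module.End R (TSpace R n (r + s))) R (WalledDiagram r s)
    (fun d => Matrix.toLin' (diagMatrix R n (r + s) d.1))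

/-- The representation `σ_{r+s}` of the group algebra `R𝔖_{r+s}` on ordinary tensor
space. -/
noncomputable def symRep :
    MonoidAlgebra R (Equiv.Perm (Fin (r + s))) →ₗ[R] Module.End R (TSpace R n (r + s)) :=
  Finsupp.lift (Module.End R (TSpace R n (r + s))) R (Equiv.Perm (Fin (r + s)))
    (fun σ => Matrix.toLin' (permMatrix R n (r + s) σ)) ∘ₗ
    (MonoidAlgebra.coeffLinearEquiv R).toLinearMap


section Aux

set_option linter.unusedSectionVars false



open Matrix

variable {R : Type*} [CommRing R] {n m : ℕ}

/-- Combine the left part (positions `< r`) of `a` with the right part of `b`. -/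
def mixIdx (r : ℕ) (a b : Idx n m) : Idx n m := fun k => if (k : ℕ) < r then a k else b k

lemma mixIdx_mixIdx (r : ℕ) (a b : Idx n m) :
    mixIdx r (mixIdx r a b) (mixIdx r b a) = a := by
  funext k; simp only [mixIdx]; split_ifs <;> rfl

/-- Partial transpose of a matrix on tensor-index space. -/
def ptM (r : ℕ) (M : Matrix (Idx n m) (Idx n m) R) : Matrix (Idx n m) (Idx n m) R :=
  fun a b => M (mixIdx r a b) (mixIdx r b a)

lemma ptM_ptM (r : ℕ) (M : Matrix (Idx n m) (Idx n m) R) : ptM r (ptM r M) = M := by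
  funext a b; simp only [ptM, mixIdx_mixIdx]

lemma ptM_injective (r : ℕ) : Function.Injective (ptM (R := R) (n := n) (m := m) r) := by
  intro X Y h
  rw [← ptM_ptM r X, h, ptM_ptM]

/-- The matrix acting as `g` on the first `r` tensor factors and as `h` on the rest. -/
def genM (r : ℕ) (g h : Matrix (Fin n) (Fin n) R) : Matrix (Idx n m) (Idx n m) R :=
  fun a b => ∏ k : Fin m, if (k : ℕ) < r then g (a k) (b k) else h (a k) (b k)

lemma genM_mul (r : ℕ) (g h g₂ h₂ : Matrix (Fin n) (Fin n) R) :
    genM r g h * genM r g₂ h₂ = (genM r (g * g₂) (h * h₂) : Matrix (Idx n m) (Idx n m) R) := by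
  ext a b
  rw [Matrix.mul_apply]
  have key : ∀ c : Idx n m, genM (R := R) r g h a c * genM r g₂ h₂ c b
      = ∏ k : Fin m, (if (k : ℕ) < r then g (a k) (c k) * g₂ (c k) (b k)
          else h (a k) (c k) * h₂ (c k) (b k)) := by
    intro c
    rw [genM, genM, ← Finset.prod_mul_distrib]
    exact Finset.prod_congr rfl fun k _ => by split_ifs <;> ring
  simp_rw [key]
  have rhs : genM r (g * g₂) (h * h₂) a b
      = ∏ k : Fin m, ∑ j : Fin n, (if (k : ℕ) < r then g (a k) j * g₂ j (b k)
          else h (a k) j * h₂ j (b k)) := by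
    rw [genM]
    refine Finset.prod_congr rfl fun k _ => ?_
    by_cases hk : (k : ℕ) < r <;> simp [hk, Matrix.mul_apply]
  rw [rhs, Finset.prod_univ_sum, Fintype.piFinset_univ]

lemma genM_one (r : ℕ) : (genM r 1 1 : Matrix (Idx n m) (Idx n m) R) = 1 := by
  ext a b
  by_cases hab : a = b
  · subst hab
    simp [genM, Matrix.one_apply]
  · rw [Matrix.one_apply_ne hab]
    obtain ⟨k, hk⟩ := Function.ne_iff.mp hab
    refine Finset.prod_eq_zero (Finset.mem_univ k) ?_
    split_ifs <;> exact Matrix.one_apply_ne hk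

lemma ptM_genM_mul_genM (r : ℕ) (g h g₂ h₂ : Matrix (Fin n) (Fin n) R)
    (M : Matrix (Idx n m) (Idx n m) R) :
    ptM r (genM r g h * M * genM r g₂ h₂) = genM r g h₂ᵀ * ptM r M * genM r g₂ hᵀ := by
  ext a b
  simp only [ptM]
  rw [Matrix.mul_apply, Matrix.mul_apply]
  simp only [Matrix.mul_apply, Finset.sum_mul]
  rw [← Finset.sum_product', ← Finset.sum_product']
  rw [Finset.univ_product_univ]
  refine Fintype.sum_equiv
    ⟨fun p => (mixIdx r p.1 p.2, mixIdx r p.2 p.1), fun p => (mixIdx r p.1 p.2, mixIdx r p.2 p.1),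
      fun p => Prod.ext (mixIdx_mixIdx r _ _) (mixIdx_mixIdx r _ _),
      fun p => Prod.ext (mixIdx_mixIdx r _ _) (mixIdx_mixIdx r _ _)⟩
    _ _ fun p => ?_
  obtain ⟨d, c⟩ := p
  simp only [Equiv.coe_fn_mk, ptM, mixIdx_mixIdx]
  have h2 : genM (R := R) r g h (mixIdx r a b) c * genM r g₂ h₂ d (mixIdx r b a)
      = genM r g h₂ᵀ a (mixIdx r c d) * genM r g₂ hᵀ (mixIdx r d c) b := by
    rw [genM, genM, genM, genM, ← Finset.prod_mul_distrib, ← Finset.prod_mul_distrib]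
    refine Finset.prod_congr rfl fun k _ => ?_
    by_cases hk : (k : ℕ) < r <;> simp [mixIdx, hk, Matrix.transpose_apply] <;> ring
  linear_combination (M c d) * h2



open Matrix

variable {R : Type*} [CommRing R] {n r s : ℕ}

lemma glMixed_eq (g : GL (Fin n) R) :
    glMixedMatrix R n r s g = genM r (g : Matrix (Fin n) (Fin n) R)
      ((g⁻¹ : GL (Fin n) R) : Matrix (Fin n) (Fin n) R)ᵀ := by
  funext a b
  refine Finset.prod_congr rfl fun k _ => ?_
  split_ifs <;> rfl

lemma glOrd_eq (g : GL (Fin n) R) :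
    glOrdMatrix R n (r + s) g = genM r (g : Matrix (Fin n) (Fin n) R)
      (g : Matrix (Fin n) (Fin n) R) := by
  funext a b
  refine Finset.prod_congr rfl fun k _ => ?_
  split_ifs <;> rfl

lemma commute_transfer (g : GL (Fin n) R) (M : Matrix (Idx n (r + s)) (Idx n (r + s)) R) :
    M * glMixedMatrix R n r s g = glMixedMatrix R n r s g * M ↔
    ptM r M * glOrdMatrix R n (r + s) g = glOrdMatrix R n (r + s) g * ptM r M := by
  set G : Matrix (Fin n) (Fin n) R := (g : Matrix (Fin n) (Fin n) R) with hG
  set Gi : Matrix (Fin n) (Fin n) R := ((g⁻¹ : GL (Fin n) R) : Matrix (Fin n) (Fin n) R) with hGi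
  have hGGi : G * Gi = 1 := g.mul_inv
  have hGiG : Gi * G = 1 := g.inv_mul
  set ψ : Matrix (Idx n (r + s)) (Idx n (r + s)) R := ptM r M with hψ
  have e1 : ptM r (M * glMixedMatrix R n r s g) = genM r 1 Gi * ψ * genM r G 1 := by
    conv_lhs => rw [glMixed_eq, show M = genM r (1 : Matrix (Fin n) (Fin n) R) 1 * M by
      rw [genM_one, one_mul]]
    rw [ptM_genM_mul_genM, Matrix.transpose_transpose, Matrix.transpose_one]
  have e2 : ptM r (glMixedMatrix R n r s g * M) = genM r G 1 * ψ * genM r 1 Gi := by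
    conv_lhs => rw [glMixed_eq, show M = M * genM r (1 : Matrix (Fin n) (Fin n) R) 1 by
      rw [genM_one, mul_one]]
    rw [show genM r G Giᵀ * (M * genM r (1 : Matrix (Fin n) (Fin n) R) 1)
        = genM r G Giᵀ * M * genM r (1 : Matrix (Fin n) (Fin n) R) 1 from (mul_assoc _ _ _).symm]
    rw [ptM_genM_mul_genM, Matrix.transpose_transpose, Matrix.transpose_one]
  rw [glOrd_eq]
  constructor
  · intro hM
    have E : genM r 1 Gi * ψ * genM r G 1 = genM r G 1 * ψ * genM r 1 Gi := by
      rw [← e1, hM, e2]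
    have p1 : genM r (1 : Matrix (Fin n) (Fin n) R) G * genM r 1 Gi
        = (1 : Matrix (Idx n (r + s)) (Idx n (r + s)) R) := by
      rw [genM_mul, one_mul, hGGi, genM_one]
    have p2 : genM r (1 : Matrix (Fin n) (Fin n) R) Gi * genM r 1 G
        = (1 : Matrix (Idx n (r + s)) (Idx n (r + s)) R) := by
      rw [genM_mul, one_mul, hGiG, genM_one]
    have p3 : genM r G (1 : Matrix (Fin n) (Fin n) R) * genM r 1 G
        = (genM r G G : Matrix (Idx n (r + s)) (Idx n (r + s)) R) := by
      rw [genM_mul, mul_one, one_mul]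
    have p4 : genM r (1 : Matrix (Fin n) (Fin n) R) G * genM r G 1
        = (genM r G G : Matrix (Idx n (r + s)) (Idx n (r + s)) R) := by
      rw [genM_mul, mul_one, one_mul]
    calc ψ * genM r G G = 1 * ψ * (genM r G 1 * genM r 1 G) := by rw [p3, one_mul]
      _ = (genM r 1 G * genM r 1 Gi) * ψ * (genM r G 1 * genM r 1 G) := by rw [p1]
      _ = genM r 1 G * (genM r 1 Gi * ψ * genM r G 1) * genM r 1 G := by
          simp only [mul_assoc]
      _ = genM r 1 G * (genM r G 1 * ψ * genM r 1 Gi) * genM r 1 G := by rw [E]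
      _ = (genM r 1 G * genM r G 1) * ψ * (genM r 1 Gi * genM r 1 G) := by
          simp only [mul_assoc]
      _ = genM r G G * ψ * 1 := by rw [p4, p2]
      _ = genM r G G * ψ := by rw [mul_one]
  · intro hO
    apply ptM_injective r
    rw [e1, e2]
    have q1 : genM r G (1 : Matrix (Fin n) (Fin n) R)
        = (genM r G G * genM r 1 Gi : Matrix (Idx n (r + s)) (Idx n (r + s)) R) := by
      rw [genM_mul, mul_one, hGGi]
    have q2 : genM r G (1 : Matrix (Fin n) (Fin n) R)
        = (genM r 1 Gi * genM r G G : Matrix (Idx n (r + s)) (Idx n (r + s)) R) := by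
      rw [genM_mul, one_mul, hGiG]
    calc genM r 1 Gi * ψ * genM r G 1
        = genM r 1 Gi * ψ * (genM r G G * genM r 1 Gi) := by rw [← q1]
      _ = genM r 1 Gi * (ψ * genM r G G) * genM r 1 Gi := by simp only [mul_assoc]
      _ = genM r 1 Gi * (genM r G G * ψ) * genM r 1 Gi := by rw [hO]
      _ = (genM r 1 Gi * genM r G G) * ψ * genM r 1 Gi := by simp only [mul_assoc]
      _ = genM r G 1 * ψ * genM r 1 Gi := by rw [← q2]

end Aux


section Comb

variable {n r s : ℕ} {R : Type*} [CommRing R]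

/-- The `a`-vertex (one where the labelling uses the top index) with index `k`. -/
def iaV (r : ℕ) {m : ℕ} (k : Fin m) : Vertex m :=
  if (k : ℕ) < r then Sum.inl k else Sum.inr k

/-- The `b`-vertex with index `k`. -/
def ibV (r : ℕ) {m : ℕ} (k : Fin m) : Vertex m :=
  if (k : ℕ) < r then Sum.inr k else Sum.inl k

/-- The index of a vertex. -/
def idxV {m : ℕ} : Vertex m → Fin m := Sum.elim id id

lemma idxV_iaV (r : ℕ) {m : ℕ} (k : Fin m) : idxV (iaV r k) = k := by
  unfold iaV idxV; split_ifs <;> rfl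

lemma idxV_ibV (r : ℕ) {m : ℕ} (k : Fin m) : idxV (ibV r k) = k := by
  unfold ibV idxV; split_ifs <;> rfl

lemma row_left_iaV (r : ℕ) {m : ℕ} (k : Fin m) : rowOf (iaV r k) = leftOf r (iaV r k) := by
  unfold iaV rowOf leftOf; split_ifs with h <;> simp [h]

lemma row_left_ibV (r : ℕ) {m : ℕ} (k : Fin m) : rowOf (ibV r k) ≠ leftOf r (ibV r k) := by
  unfold ibV rowOf leftOf; split_ifs with h <;> simp [h]

lemma row_iaV (r : ℕ) {m : ℕ} (k : Fin m) : rowOf (iaV r k) = decide ((k : ℕ) < r) := by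
  unfold iaV rowOf; split_ifs with h <;> simp [h]

lemma left_iaV (r : ℕ) {m : ℕ} (k : Fin m) : leftOf r (iaV r k) = decide ((k : ℕ) < r) := by
  unfold iaV leftOf; split_ifs with h <;> simp [h]

lemma row_ibV (r : ℕ) {m : ℕ} (k : Fin m) : rowOf (ibV r k) = !decide ((k : ℕ) < r) := by
  unfold ibV rowOf; split_ifs with h <;> simp [h]

lemma left_ibV (r : ℕ) {m : ℕ} (k : Fin m) : leftOf r (ibV r k) = decide ((k : ℕ) < r) := by
  unfold ibV leftOf; split_ifs with h <;> simp [h]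

lemma iaV_ne_ibV (r : ℕ) {m : ℕ} (k k' : Fin m) : iaV r k ≠ ibV r k' := by
  unfold iaV ibV
  split_ifs with h1 h2 h2 <;> intro hc <;> simp at hc <;> (subst hc; omega)

lemma iaV_idxV (r : ℕ) {m : ℕ} {v : Vertex m} (h : rowOf v = leftOf r v) :
    iaV r (idxV v) = v := by
  rcases v with k | k
  · have hk : (k : ℕ) < r := by simpa [rowOf, leftOf] using h.symm
    simp [iaV, idxV, hk]
  · have hk : ¬ (k : ℕ) < r := by simpa [rowOf, leftOf] using h.symm
    simp [iaV, idxV, hk]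

lemma ibV_idxV (r : ℕ) {m : ℕ} {v : Vertex m} (h : rowOf v ≠ leftOf r v) :
    ibV r (idxV v) = v := by
  rcases v with k | k
  · have hk : ¬ (k : ℕ) < r := by
      intro hk; exact h (by simp [rowOf, leftOf, hk])
    simp [ibV, idxV, hk]
  · have hk : (k : ℕ) < r := by
      by_contra hk; exact h (by simp [rowOf, leftOf, hk])
    simp [ibV, idxV, hk]

lemma elim_mix_apply (r : ℕ) {m : ℕ} (a b : Idx n m) (v : Vertex m) :
    Sum.elim (mixIdx r a b) (mixIdx r b a) v
      = if rowOf v = leftOf r v then a (idxV v) else b (idxV v) := by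
  rcases v with k | k <;> by_cases hk : (k : ℕ) < r <;>
    simp [mixIdx, rowOf, leftOf, idxV, hk]

lemma elim_mix_iaV (r : ℕ) {m : ℕ} (a b : Idx n m) (k : Fin m) :
    Sum.elim (mixIdx r a b) (mixIdx r b a) (iaV r k) = a k := by
  rw [elim_mix_apply, if_pos (row_left_iaV r k), idxV_iaV]

lemma elim_mix_ibV (r : ℕ) {m : ℕ} (a b : Idx n m) (k : Fin m) :
    Sum.elim (mixIdx r a b) (mixIdx r b a) (ibV r k) = b k := by
  rw [elim_mix_apply, if_neg (row_left_ibV r k), idxV_ibV]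

lemma walled_flip {d : Vertex (r + s) → Vertex (r + s)} (hd : IsWalled r s d)
    (v : Vertex (r + s)) :
    (rowOf (d v) = leftOf r (d v)) ↔ ¬ (rowOf v = leftOf r v) := by
  obtain ⟨h1, h2⟩ := hd.2.2 v
  cases c1 : rowOf v <;> cases c2 : rowOf (d v) <;> cases c3 : leftOf r v <;>
    cases c4 : leftOf r (d v) <;> simp_all

lemma exists_perm {d : Vertex (r + s) → Vertex (r + s)} (hd : IsWalled r s d) :
    ∃ τ : Equiv.Perm (Fin (r + s)),
      ptM r (diagMatrix R n (r + s) d) = permMatrix R n (r + s) τ := by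
  classical
  have hinv : ∀ v, d (d v) = v := hd.1
  set σ0 : Fin (r + s) → Fin (r + s) := fun k => idxV (d (iaV r k)) with hσ0
  have hbd : ∀ k, ibV r (σ0 k) = d (iaV r k) := by
    intro k
    refine ibV_idxV r ?_
    intro hc
    exact ((walled_flip hd (iaV r k)).mp hc) (row_left_iaV r k)
  have hinj : Function.Injective σ0 := by
    intro k k' h
    have h1 : d (iaV r k) = d (iaV r k') := by rw [← hbd k, ← hbd k', h]
    have h2 : iaV r k = iaV r k' := by rw [← hinv (iaV r k), h1, hinv]
    have h3 := congrArg idxV h2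
    simpa [idxV_iaV] using h3
  have hbij : Function.Bijective σ0 := Finite.injective_iff_bijective.mp hinj
  let σ : Equiv.Perm (Fin (r + s)) := Equiv.ofBijective σ0 hbij
  have hσ0σ : ∀ k, σ0 k = σ k := fun _ => rfl
  refine ⟨σ.symm, ?_⟩
  funext a b
  show diagMatrix R n (r + s) d (mixIdx r a b) (mixIdx r b a) = permMatrix R n (r + s) σ.symm a b
  rw [diagMatrix, permMatrix]
  refine if_congr ?_ rfl rfl
  have key : ∀ (h : b = a ∘ σ.symm) (v : Vertex (r + s)), rowOf v = leftOf r v →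
      Sum.elim (mixIdx r a b) (mixIdx r b a) v
        = Sum.elim (mixIdx r a b) (mixIdx r b a) (d v) := by
    intro h v hv
    have hv' : iaV r (idxV v) = v := iaV_idxV r hv
    conv_lhs => rw [← hv']
    conv_rhs => rw [← hv']
    rw [elim_mix_iaV, ← hbd, elim_mix_ibV, h]
    simp only [Function.comp_apply, hσ0σ, Equiv.symm_apply_apply]
  constructor
  · intro h
    funext j
    have hk := h (iaV r (σ.symm j))
    rw [elim_mix_iaV, ← hbd, elim_mix_ibV] at hk
    have hj : σ0 (σ.symm j) = j := by rw [hσ0σ]; exact σ.apply_symm_apply j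
    rw [hj] at hk
    simp only [Function.comp_apply]
    exact hk.symm
  · intro h v
    by_cases hv : rowOf v = leftOf r v
    · exact key h v hv
    · have hw : rowOf (d v) = leftOf r (d v) := (walled_flip hd v).mpr hv
      have := key h (d v) hw
      rw [hinv] at this
      exact this.symm

lemma exists_diag (τ : Equiv.Perm (Fin (r + s))) :
    ∃ d : WalledDiagram r s,
      ptM r (diagMatrix R n (r + s) d.1) = permMatrix R n (r + s) τ := by
  classical
  set d : Vertex (r + s) → Vertex (r + s) := fun v =>
    if rowOf v = leftOf r v then ibV r (τ⁻¹ (idxV v)) else iaV r (τ (idxV v)) with hdd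
  have dia : ∀ k, d (iaV r k) = ibV r (τ⁻¹ k) := by
    intro k
    rw [hdd]
    simp only
    rw [if_pos (row_left_iaV r k), idxV_iaV]
  have dib : ∀ k, d (ibV r k) = iaV r (τ k) := by
    intro k
    rw [hdd]
    simp only
    rw [if_neg (row_left_ibV r k), idxV_ibV]
  have hw : IsWalled r s d := by
    refine ⟨?_, ?_, ?_⟩
    · intro v
      by_cases hv : rowOf v = leftOf r v
      · have h1 : d v = ibV r (τ⁻¹ (idxV v)) := by rw [hdd]; simp only [if_pos hv]
        rw [h1, dib, ← Equiv.Perm.mul_apply, mul_inv_cancel, Equiv.Perm.one_apply, iaV_idxV r hv]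
      · have h1 : d v = iaV r (τ (idxV v)) := by rw [hdd]; simp only [if_neg hv]
        rw [h1, dia, ← Equiv.Perm.mul_apply, inv_mul_cancel, Equiv.Perm.one_apply, ibV_idxV r hv]
    · intro v hc
      by_cases hv : rowOf v = leftOf r v
      · have h1 : d v = ibV r (τ⁻¹ (idxV v)) := by rw [hdd]; simp only [if_pos hv]
        rw [h1] at hc
        exact iaV_ne_ibV r (idxV v) (τ⁻¹ (idxV v)) ((iaV_idxV r hv).symm ▸ hc.symm ▸ rfl)
      · have h1 : d v = iaV r (τ (idxV v)) := by rw [hdd]; simp only [if_neg hv]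
        rw [h1] at hc
        exact iaV_ne_ibV r (τ (idxV v)) (idxV v) (hc.trans (ibV_idxV r hv).symm)
    · intro v
      by_cases hv : rowOf v = leftOf r v
      · have h1 : d v = ibV r (τ⁻¹ (idxV v)) := by rw [hdd]; simp only [if_pos hv]
        rw [h1, row_ibV, left_ibV, ← hv]
        cases hx : rowOf v <;> cases hy : decide ((((τ⁻¹ : Equiv.Perm (Fin (r+s))) (idxV v)) : ℕ) < r) <;>
          simp_all
      · have h1 : d v = iaV r (τ (idxV v)) := by rw [hdd]; simp only [if_neg hv]
        have hv2 : rowOf v = !leftOf r v := by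
          cases hx : rowOf v <;> cases hy : leftOf r v <;> simp_all
        rw [h1, row_iaV, left_iaV, hv2]
        cases hx : leftOf r v <;> cases hy : decide (((τ (idxV v)) : ℕ) < r) <;> simp_all
  refine ⟨⟨d, hw⟩, ?_⟩
  funext a b
  show diagMatrix R n (r + s) d (mixIdx r a b) (mixIdx r b a) = permMatrix R n (r + s) τ a b
  rw [diagMatrix, permMatrix]
  refine if_congr ?_ rfl rfl
  constructor
  · intro h
    funext k
    have hk := h (ibV r k)
    rw [elim_mix_ibV, dib, elim_mix_iaV] at hk
    simpa using hk
  · intro h v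
    by_cases hv : rowOf v = leftOf r v
    · conv_lhs => rw [← iaV_idxV r hv]
      conv_rhs => rw [← iaV_idxV r hv]
      rw [elim_mix_iaV, dia, elim_mix_ibV, h]
      simp
    · conv_lhs => rw [← ibV_idxV r hv]
      conv_rhs => rw [← ibV_idxV r hv]
      rw [elim_mix_ibV, dib, elim_mix_iaV, h]
      simp

end Comb


section Glue

variable {R : Type*} [CommRing R] {n r s : ℕ}

/-- Partial transpose as a linear equivalence on matrices. -/
def ptLE (R : Type*) [CommRing R] (n r m : ℕ) :
    Matrix (Idx n m) (Idx n m) R ≃ₗ[R] Matrix (Idx n m) (Idx n m) R where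
  toFun := ptM r
  invFun := ptM r
  map_add' := fun M N => rfl
  map_smul' := fun c M => rfl
  left_inv := ptM_ptM r
  right_inv := ptM_ptM r

/-- Partial transpose conjugated to an equivalence of endomorphism spaces. -/
noncomputable def ptEnd (R : Type*) [CommRing R] (n r s : ℕ) :
    Module.End R (TSpace R n (r + s)) ≃ₗ[R] Module.End R (TSpace R n (r + s)) :=
  LinearMap.toMatrix'.trans ((ptLE R n r (r + s)).trans Matrix.toLin')

lemma ptEnd_apply (φ : Module.End R (TSpace R n (r + s))) :
    ptEnd R n r s φ = Matrix.toLin' (ptM r (LinearMap.toMatrix' φ)) := rfl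

lemma toMatrix'_ptEnd (φ : Module.End R (TSpace R n (r + s))) :
    LinearMap.toMatrix' (ptEnd R n r s φ) = ptM r (LinearMap.toMatrix' φ) := by
  rw [ptEnd_apply, LinearMap.toMatrix'_toLin']

lemma commute_toLin'_iff (φ : Module.End R (TSpace R n (r + s)))
    (A : Matrix (Idx n (r + s)) (Idx n (r + s)) R) :
    Commute φ (Matrix.toLin' A) ↔
      LinearMap.toMatrix' φ * A = A * LinearMap.toMatrix' φ := by
  have key : ∀ B C : Matrix (Idx n (r + s)) (Idx n (r + s)) R,
      (Matrix.toLin' B * Matrix.toLin' C : Module.End R (TSpace R n (r + s)))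
        = Matrix.toLin' (B * C) := by
    intro B C
    rw [Matrix.toLin'_mul]
    rfl
  unfold Commute SemiconjBy
  conv_lhs => rw [← Matrix.toLin'_toMatrix' φ]
  rw [key, key]
  constructor
  · intro h
    exact Matrix.toLin'.injective h
  · intro h
    exact congrArg _ h

lemma mem_mixed_iff (φ : Module.End R (TSpace R n (r + s))) :
    φ ∈ EndGMixed R n r s ↔ ptEnd R n r s φ ∈ EndGOrd R n r s := by
  unfold EndGMixed EndGOrd
  simp only [Set.mem_setOf_eq]
  refine forall_congr' fun g => ?_
  rw [commute_toLin'_iff, commute_toLin'_iff, toMatrix'_ptEnd]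
  exact commute_transfer g (LinearMap.toMatrix' φ)

lemma range_lift {ι M : Type*} [AddCommGroup M] [Module R M] (f : ι → M) :
    LinearMap.range (Finsupp.lift M R ι f) = Submodule.span R (Set.range f) := by
  have h : (Finsupp.lift M R ι f : (ι →₀ R) →ₗ[R] M) = Finsupp.linearCombination R f := by
    apply LinearMap.ext
    intro l
    rw [Finsupp.lift_apply, Finsupp.linearCombination_apply]
  rw [h, Finsupp.range_linearCombination]

lemma image_gen :
    (ptEnd R n r s) '' (Set.range fun d : WalledDiagram r s =>
        Matrix.toLin' (diagMatrix R n (r + s) d.1))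
      = Set.range fun τ : Equiv.Perm (Fin (r + s)) =>
        Matrix.toLin' (permMatrix R n (r + s) τ) := by
  apply Set.Subset.antisymm
  · rintro x ⟨y, ⟨d, rfl⟩, rfl⟩
    obtain ⟨τ, hτ⟩ := exists_perm (R := R) (n := n) d.2
    refine ⟨τ, ?_⟩
    rw [ptEnd_apply, LinearMap.toMatrix'_toLin', hτ]
  · rintro x ⟨τ, rfl⟩
    obtain ⟨d, hd⟩ := exists_diag (R := R) (n := n) τ
    refine ⟨Matrix.toLin' (diagMatrix R n (r + s) d.1), ⟨d, rfl⟩, ?_⟩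
    rw [ptEnd_apply, LinearMap.toMatrix'_toLin', hd]

lemma image_endG :
    (ptEnd R n r s) '' EndGMixed R n r s = EndGOrd R n r s := by
  ext x
  constructor
  · rintro ⟨φ, hφ, rfl⟩
    exact (mem_mixed_iff φ).mp hφ
  · intro hx
    refine ⟨(ptEnd R n r s).symm x, ?_, (ptEnd R n r s).apply_symm_apply x⟩
    rw [mem_mixed_iff, (ptEnd R n r s).apply_symm_apply]
    exact hx

end Glue

/-- q = 1: `σ_{r,s} : B^n_{r,s} → End_G(V^{⊗r} ⊗ (V^*)^{⊗s})` is surjective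
if and only if `σ_{r+s} : R𝔖_{r+s} → End_G(V^{⊗(r+s)})` is surjective, `G = GL_n(R)`. -/
theorem walled_surjective_iff_sym_surjective :
    ((LinearMap.range (walledRep R n r s) : Set (Module.End R (TSpace R n (r + s)))) =
        EndGMixed R n r s) ↔
    ((LinearMap.range (symRep R n r s) : Set (Module.End R (TSpace R n (r + s)))) =
        EndGOrd R n r s) := by
  have hw : LinearMap.range (walledRep R n r s)
      = Submodule.span R (Set.range fun d : WalledDiagram r s =>
          Matrix.toLin' (diagMatrix R n (r + s) d.1)) := range_lift _
  have hs : LinearMap.range (symRep R n r s)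
      = Submodule.span R (Set.range fun τ : Equiv.Perm (Fin (r + s)) =>
          Matrix.toLin' (permMatrix R n (r + s) τ)) :=
    (LinearEquiv.range_comp _ _).trans (range_lift _)
  rw [hw, hs]
  have himg : (ptEnd R n r s) '' ((Submodule.span R (Set.range fun d : WalledDiagram r s =>
          Matrix.toLin' (diagMatrix R n (r + s) d.1)) :
            Submodule R (Module.End R (TSpace R n (r + s)))) : Set _)
      = ((Submodule.span R (Set.range fun τ : Equiv.Perm (Fin (r + s)) =>
          Matrix.toLin' (permMatrix R n (r + s) τ)) :
            Submodule R (Module.End R (TSpace R n (r + s)))) : Set _) := by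
    rw [← image_gen]
    simp only [← LinearEquiv.coe_coe]
    rw [← Submodule.map_span, Submodule.map_coe]
  constructor
  · intro h
    rw [← himg, h, image_endG]
  · intro h
    apply (Set.image_eq_image (ptEnd R n r s).injective).mp
    rw [himg, image_endG]
    exact h

end ClassicalWalledBrauer
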